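/- Let R be a Euclidean domain with a multiplicative norm, and let p ∈ R be a non-unit element of minimal norm among non-units. Then p is prime in R, and the natural map on unit groups R^× → (R/(p))^× is surjective. -/
import Mathlib


/-- Let `R` be a Euclidean domain with a multiplicative norm `N`
(division with remainder holds with respect to `N`), and let `p` be a nonzero non-unit of
minimal norm among nonzero non-units.  Then `p` is prime, and the natural map
`R^× → (R/(p))^×` on unit groups is surjective. -/
theorem minimal_norm_element_prime_and_units_surjective
    (R : Type*) [CommRing R] [IsDomain R]
    (N : R → ℕ)
    (hNmul : ∀ a b : R, a ≠ 0 → b ≠ 0 → N (a * b) = N a * N b)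
    (hdiv : ∀ a b : R, b ≠ 0 → ∃ q r : R, a = b * q + r ∧ (r = 0 ∨ N r < N b))
    (p : R) (hp0 : p ≠ 0) (hpu : ¬ IsUnit p)
    (hmin : ∀ x : R, x ≠ 0 → ¬ IsUnit x → N p ≤ N x) :
    Prime p ∧
      ∀ u : (R ⧸ Ideal.span ({p} : Set R))ˣ,
        ∃ w : Rˣ, Ideal.Quotient.mk (Ideal.span ({p} : Set R)) (w : R) = (u : R ⧸ Ideal.span ({p} : Set R)) := by
  set I : Ideal R := Ideal.span ({p} : Set R) with hI
  have hItop : I ≠ ⊤ := by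
    simpa [hI, Ideal.span_singleton_eq_top] using hpu
  haveI : Nontrivial (R ⧸ I) := Ideal.Quotient.nontrivial_iff.mpr hItop
  -- every element of R is congruent mod p to 0 or to a unit
  have key : ∀ a : R, ∃ r : R, Ideal.Quotient.mk I a = Ideal.Quotient.mk I r ∧
      (r = 0 ∨ IsUnit r) := by
    intro a
    obtain ⟨q, r, hqr, hr⟩ := hdiv a p hp0
    refine ⟨r, ?_, ?_⟩
    · have hpq : Ideal.Quotient.mk I (p * q) = 0 := by
        rw [Ideal.Quotient.eq_zero_iff_mem, hI, Ideal.mem_span_singleton]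
        exact ⟨q, rfl⟩
      rw [hqr, map_add, hpq, zero_add]
    · rcases eq_or_ne r 0 with h0 | h0
      · exact Or.inl h0
      · refine Or.inr ?_
        by_contra hru
        rcases hr with h | h
        · exact h0 h
        · exact absurd h (not_lt.mpr (hmin r h0 hru))
  -- R/(p) is a field
  have hfield : IsField (R ⧸ I) := by
    refine ⟨⟨0, 1, zero_ne_one⟩, mul_comm, ?_⟩
    intro x hx
    obtain ⟨a, rfl⟩ := Ideal.Quotient.mk_surjective x
    obtain ⟨r, hr, hr'⟩ := key a
    rcases hr' with h0 | hu
    · exact absurd (by rw [hr, h0, map_zero]) hx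
    · obtain ⟨v, rfl⟩ := hu
      refine ⟨Ideal.Quotient.mk I ((v⁻¹ : Rˣ) : R), ?_⟩
      rw [hr, ← map_mul]
      simp
  have hmax : I.IsMaximal := Ideal.Quotient.maximal_of_isField I hfield
  have hprime : Prime p := by
    rw [← Ideal.span_singleton_prime hp0]
    exact hmax.isPrime
  refine ⟨hprime, ?_⟩
  intro u
  obtain ⟨a, ha⟩ := Ideal.Quotient.mk_surjective (u : R ⧸ I)
  obtain ⟨r, hr, hr'⟩ := key a
  rcases hr' with h0 | hu
  · exfalso
    have : (u : R ⧸ I) = 0 := by rw [← ha, hr, h0, map_zero]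
    exact Units.ne_zero u this
  · obtain ⟨v, rfl⟩ := hu
    exact ⟨v, by rw [← ha, hr]⟩
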